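/- For every integer ℓ ≥ 1, let N be the 2^ℓ × 2^ℓ matrix with rows and columns indexed by {0,1}^ℓ defined by N_{x,y} = (−1)^{g_ℓ(x,y)}, where g_ℓ(x,y) = x₁ + y₁ + Σ_{i=2}^{ℓ} x_i·y_i (mod 2). Then for all sets A, B ⊆ {0,1}^ℓ, the absolute value of the sum Σ_{x∈A, y∈B} N_{x,y} is at most 2^{3(ℓ−1)/2}. -/

import Mathlib

/-- The gadget `g_ℓ(x,y) = x₁ + y₁ + Σ_{i=2}^{ℓ} x_i·y_i (mod 2)` (coordinates
indexed by `Fin ℓ`, with `x₁` corresponding to index `0`). -/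
def gl (ℓ : ℕ) (hℓ : 0 < ℓ) (x y : Fin ℓ → Bool) : Bool :=
  decide ((((x ⟨0, hℓ⟩).toNat + (y ⟨0, hℓ⟩).toNat +
    ∑ i ∈ Finset.univ.filter (fun i : Fin ℓ => 1 ≤ (i : ℕ)),
      (x i).toNat * (y i).toNat) % 2) = 1)

open Finset

noncomputable def chi (ℓ : ℕ) (x y : Fin ℓ → Bool) : ℝ :=
  ∏ i ∈ Finset.univ.filter (fun i : Fin ℓ => 1 ≤ (i : ℕ)), (-1 : ℝ) ^ ((x i).toNat * (y i).toNat)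

def e0 (ℓ : ℕ) (hℓ : 0 < ℓ) : Fin ℓ := ⟨0, hℓ⟩

def rst (ℓ : ℕ) (hℓ : 0 < ℓ) (x : Fin ℓ → Bool) : Fin ℓ → Bool :=
  Function.update x (e0 ℓ hℓ) false

def tset (ℓ : ℕ) (hℓ : 0 < ℓ) : Fin ℓ → Finset Bool :=
  fun i => if i = e0 ℓ hℓ then {false} else Finset.univ

def Rset (ℓ : ℕ) (hℓ : 0 < ℓ) : Finset (Fin ℓ → Bool) := Fintype.piFinset (tset ℓ hℓ)

noncomputable def coeff (ℓ : ℕ) (hℓ : 0 < ℓ) (C : Finset (Fin ℓ → Bool)) (u : Fin ℓ → Bool) : ℝ :=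
  ∑ x ∈ C.filter (fun x => rst ℓ hℓ x = u), (-1 : ℝ) ^ (x (e0 ℓ hℓ)).toNat

lemma gl_eq (ℓ : ℕ) (hℓ : 0 < ℓ) (x y : Fin ℓ → Bool) :
    (if gl ℓ hℓ x y then (-1 : ℝ) else 1)
      = (-1 : ℝ) ^ (x (e0 ℓ hℓ)).toNat * ((-1 : ℝ) ^ (y (e0 ℓ hℓ)).toNat * chi ℓ x y) := by
  have h1 : ∀ n : ℕ, (if (decide (n % 2 = 1) : Bool) then (-1 : ℝ) else 1) = (-1 : ℝ) ^ n := by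
    intro n
    rcases Nat.even_or_odd n with h | h
    · simp [Nat.even_iff.mp h, h.neg_one_pow]
    · simp [Nat.odd_iff.mp h, h.neg_one_pow]
  rw [gl, h1, pow_add, pow_add, chi, Finset.prod_pow_eq_pow_sum, e0, mul_assoc]

lemma chi_symm (ℓ : ℕ) (x y : Fin ℓ → Bool) : chi ℓ x y = chi ℓ y x := by
  unfold chi; exact Finset.prod_congr rfl fun i _ => by rw [Nat.mul_comm]

lemma chi_rst_left (ℓ : ℕ) (hℓ : 0 < ℓ) (x y : Fin ℓ → Bool) :
    chi ℓ (rst ℓ hℓ x) y = chi ℓ x y := by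
  unfold chi
  refine Finset.prod_congr rfl fun i hi => ?_
  have hi' : 1 ≤ (i : ℕ) := (Finset.mem_filter.mp hi).2
  have : i ≠ e0 ℓ hℓ := by
    intro h; rw [h] at hi'; simp [e0] at hi'
  rw [rst, Function.update_of_ne this]

lemma mem_Rset (ℓ : ℕ) (hℓ : 0 < ℓ) (u : Fin ℓ → Bool) :
    u ∈ Rset ℓ hℓ ↔ u (e0 ℓ hℓ) = false := by
  rw [Rset, Fintype.mem_piFinset]
  constructor
  · intro h
    have := h (e0 ℓ hℓ); simpa [tset] using this
  · intro h i
    by_cases hi : i = e0 ℓ hℓ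
    · subst hi; simp [tset, h]
    · simp [tset, hi]

lemma rst_mem_Rset (ℓ : ℕ) (hℓ : 0 < ℓ) (x : Fin ℓ → Bool) : rst ℓ hℓ x ∈ Rset ℓ hℓ := by
  rw [mem_Rset, rst, Function.update_self]

lemma fib (ℓ : ℕ) (hℓ : 0 < ℓ) (C : Finset (Fin ℓ → Bool)) (f : (Fin ℓ → Bool) → ℝ)
    (hf : ∀ x, f (rst ℓ hℓ x) = f x) :
    ∑ x ∈ C, (-1 : ℝ) ^ (x (e0 ℓ hℓ)).toNat * f x
      = ∑ u ∈ Rset ℓ hℓ, coeff ℓ hℓ C u * f u := by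
  rw [← Finset.sum_fiberwise_of_maps_to (fun x _ => rst_mem_Rset ℓ hℓ x)
    (fun x => (-1 : ℝ) ^ (x (e0 ℓ hℓ)).toNat * f x)]
  refine Finset.sum_congr rfl fun u _ => ?_
  rw [coeff, Finset.sum_mul]
  refine Finset.sum_congr rfl fun x hx => ?_
  have hxu : rst ℓ hℓ x = u := (Finset.mem_filter.mp hx).2
  rw [← hxu, hf]

lemma coeff_sq_le_one (ℓ : ℕ) (hℓ : 0 < ℓ) (C : Finset (Fin ℓ → Bool)) (u : Fin ℓ → Bool) :
    (coeff ℓ hℓ C u) ^ 2 ≤ 1 := by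
  set x0 := Function.update u (e0 ℓ hℓ) false with hx0
  set x1 := Function.update u (e0 ℓ hℓ) true with hx1
  have hne : x0 ≠ x1 := by
    intro h
    have := congrFun h (e0 ℓ hℓ)
    simp [hx0, hx1, Function.update_self] at this
  have hsub : C.filter (fun x => rst ℓ hℓ x = u) ⊆ {x0, x1} := by
    intro x hx
    have hxu : rst ℓ hℓ x = u := (Finset.mem_filter.mp hx).2
    have hx' : x = Function.update u (e0 ℓ hℓ) (x (e0 ℓ hℓ)) := by
      funext i
      by_cases hi : i = e0 ℓ hℓ
      · subst hi; simp [Function.update_self]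
      · rw [Function.update_of_ne hi, ← hxu, rst, Function.update_of_ne hi]
    rcases Bool.eq_false_or_eq_true (x (e0 ℓ hℓ)) with hb | hb
    · rw [hb] at hx'
      rw [hx', ← hx1]
      exact Finset.mem_insert_of_mem (Finset.mem_singleton_self _)
    · rw [hb] at hx'
      rw [hx', ← hx0]
      exact Finset.mem_insert_self _ _
  have hset : C.filter (fun x => rst ℓ hℓ x = u)
      = ({x0, x1} : Finset (Fin ℓ → Bool)).filter (fun x => x ∈ C ∧ rst ℓ hℓ x = u) := by
    ext x
    simp only [Finset.mem_filter]
    constructor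
    · intro h
      exact ⟨hsub (Finset.mem_filter.mpr h), h⟩
    · exact fun h => ⟨h.2.1, h.2.2⟩
  have heq : coeff ℓ hℓ C u
      = (if x0 ∈ C ∧ rst ℓ hℓ x0 = u then (1 : ℝ) else 0)
        + (if x1 ∈ C ∧ rst ℓ hℓ x1 = u then (-1 : ℝ) else 0) := by
    rw [coeff, hset, Finset.sum_filter, Finset.sum_pair hne]
    have e0v : x0 (e0 ℓ hℓ) = false := by simp [hx0, Function.update_self]
    have e1v : x1 (e0 ℓ hℓ) = true := by simp [hx1, Function.update_self]
    rw [e0v, e1v]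
    norm_num
  rw [heq]
  split_ifs <;> norm_num

lemma card_erase_e0 (ℓ : ℕ) (hℓ : 0 < ℓ) :
    ((Finset.univ : Finset (Fin ℓ)).erase (e0 ℓ hℓ)).card = ℓ - 1 := by
  rw [Finset.card_erase_of_mem (Finset.mem_univ _), Finset.card_univ, Fintype.card_fin]

lemma card_Rset (ℓ : ℕ) (hℓ : 0 < ℓ) : (Rset ℓ hℓ).card = 2 ^ (ℓ - 1) := by
  rw [Rset, Fintype.card_piFinset]
  have h : ∀ i : Fin ℓ, (tset ℓ hℓ i).card = if i = e0 ℓ hℓ then 1 else 2 := by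
    intro i
    by_cases hi : i = e0 ℓ hℓ <;> simp [tset, hi]
  calc (∏ i : Fin ℓ, (tset ℓ hℓ i).card)
      = ∏ i : Fin ℓ, (if i = e0 ℓ hℓ then 1 else 2) := Finset.prod_congr rfl fun i _ => h i
    _ = (if e0 ℓ hℓ = e0 ℓ hℓ then 1 else 2)
        * ∏ i ∈ Finset.univ.erase (e0 ℓ hℓ), (if i = e0 ℓ hℓ then 1 else 2) :=
        (Finset.mul_prod_erase _ _ (Finset.mem_univ _)).symm
    _ = ∏ i ∈ Finset.univ.erase (e0 ℓ hℓ), (2 : ℕ) := by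
        rw [if_pos rfl, one_mul]
        exact Finset.prod_congr rfl fun i hi => if_neg (Finset.mem_erase.mp hi).1
    _ = 2 ^ (ℓ - 1) := by rw [Finset.prod_const, card_erase_e0]

lemma ne_e0_iff (ℓ : ℕ) (hℓ : 0 < ℓ) (i : Fin ℓ) : i ≠ e0 ℓ hℓ ↔ 1 ≤ (i : ℕ) := by
  constructor
  · intro h
    rcases Nat.eq_zero_or_pos (i : ℕ) with h0 | h0
    · exact absurd (Fin.ext h0) h
    · exact h0
  · intro h hi
    rw [hi] at h; simp [e0] at h

lemma orth (ℓ : ℕ) (hℓ : 0 < ℓ) (v v' : Fin ℓ → Bool) (hv : v ∈ Rset ℓ hℓ)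
    (hv' : v' ∈ Rset ℓ hℓ) :
    ∑ u ∈ Rset ℓ hℓ, chi ℓ u v * chi ℓ u v'
      = if v = v' then (2 : ℝ) ^ (ℓ - 1) else 0 := by
  set h : (i : Fin ℓ) → Bool → ℝ := fun i b =>
    if 1 ≤ (i : ℕ) then (-1 : ℝ) ^ (b.toNat * (v i).toNat) * (-1 : ℝ) ^ (b.toNat * (v' i).toNat)
    else 1 with hh
  have stepA : ∀ u : Fin ℓ → Bool, chi ℓ u v * chi ℓ u v' = ∏ i : Fin ℓ, h i (u i) := by
    intro u
    rw [chi, chi, ← Finset.prod_mul_distrib, Finset.prod_filter]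
  have stepC : ∀ i : Fin ℓ, (∑ b ∈ tset ℓ hℓ i, h i b)
      = if i = e0 ℓ hℓ then 1 else (if v i = v' i then (2 : ℝ) else 0) := by
    intro i
    by_cases hi : i = e0 ℓ hℓ
    · subst hi
      have : ¬ (1 ≤ ((e0 ℓ hℓ : Fin ℓ) : ℕ)) := by simp [e0]
      simp [tset, hh, this]
    · have h1 : 1 ≤ (i : ℕ) := (ne_e0_iff ℓ hℓ i).mp hi
      rw [if_neg hi]
      have : tset ℓ hℓ i = (Finset.univ : Finset Bool) := by simp [tset, hi]
      rw [this, hh]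
      simp only [h1, if_true]
      rw [Fintype.sum_bool]
      rcases Bool.eq_false_or_eq_true (v i) with hb | hb <;>
        rcases Bool.eq_false_or_eq_true (v' i) with hb' | hb' <;>
        simp [hb, hb'] <;> norm_num
  calc ∑ u ∈ Rset ℓ hℓ, chi ℓ u v * chi ℓ u v'
      = ∑ u ∈ Rset ℓ hℓ, ∏ i : Fin ℓ, h i (u i) := Finset.sum_congr rfl fun u _ => stepA u
    _ = ∏ i : Fin ℓ, ∑ b ∈ tset ℓ hℓ i, h i b := (Finset.prod_univ_sum _ _).symm
    _ = ∏ i : Fin ℓ, (if i = e0 ℓ hℓ then 1 else (if v i = v' i then (2 : ℝ) else 0)) :=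
        Finset.prod_congr rfl fun i _ => stepC i
    _ = ∏ i ∈ Finset.univ.erase (e0 ℓ hℓ), (if v i = v' i then (2 : ℝ) else 0) := by
        rw [← Finset.mul_prod_erase _ _ (Finset.mem_univ (e0 ℓ hℓ)), if_pos rfl, one_mul]
        exact Finset.prod_congr rfl fun i hi => if_neg (Finset.mem_erase.mp hi).1
    _ = if v = v' then (2 : ℝ) ^ (ℓ - 1) else 0 := by
        by_cases hvv : v = v'
        · subst hvv
          rw [if_pos rfl]
          rw [show (∏ i ∈ Finset.univ.erase (e0 ℓ hℓ), (if v i = v i then (2 : ℝ) else 0))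
              = ∏ _i ∈ Finset.univ.erase (e0 ℓ hℓ), (2 : ℝ) from
            Finset.prod_congr rfl fun i _ => if_pos rfl]
          rw [Finset.prod_const, card_erase_e0]
        · rw [if_neg hvv]
          obtain ⟨i, hi⟩ := Function.ne_iff.mp hvv
          have hie : i ≠ e0 ℓ hℓ := by
            intro h'
            subst h'
            rw [(mem_Rset ℓ hℓ v).mp hv, (mem_Rset ℓ hℓ v').mp hv'] at hi
            exact hi rfl
          exact Finset.prod_eq_zero (Finset.mem_erase.mpr ⟨hie, Finset.mem_univ i⟩)
            (if_neg hi)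


/-- For the matrix `N` with entries `N_{x,y} = (-1)^{g_ℓ(x,y)}`, the sum of the
entries over any combinatorial rectangle `A × B` is at most `2^{3(ℓ-1)/2}` in
absolute value. -/
theorem stmt9 (ℓ : ℕ) (hℓ : 0 < ℓ) (A B : Finset (Fin ℓ → Bool)) :
    |∑ x ∈ A, ∑ y ∈ B, (if gl ℓ hℓ x y then (-1 : ℝ) else 1)|
      ≤ (2 : ℝ) ^ (3 * ((ℓ : ℝ) - 1) / 2) := by
  classical
  set R := Rset ℓ hℓ with hR
  set a : (Fin ℓ → Bool) → ℝ := coeff ℓ hℓ A with ha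
  set b : (Fin ℓ → Bool) → ℝ := coeff ℓ hℓ B with hb
  set P : ℝ := (2 : ℝ) ^ (ℓ - 1) with hP
  have hPnn : (0 : ℝ) ≤ P := by positivity
  set F : (Fin ℓ → Bool) → ℝ :=
    fun x => ∑ y ∈ B, (-1 : ℝ) ^ (y (e0 ℓ hℓ)).toNat * chi ℓ x y with hF
  have hFr : ∀ x, F (rst ℓ hℓ x) = F x := by
    intro x
    simp only [hF]
    exact Finset.sum_congr rfl fun y _ => by rw [chi_rst_left]
  set S : ℝ := ∑ x ∈ A, ∑ y ∈ B, (if gl ℓ hℓ x y then (-1 : ℝ) else 1) with hS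
  -- Step 1: rewrite S in bilinear form
  have step1 : S = ∑ u ∈ R, a u * F u := by
    rw [hS]
    rw [show (∑ x ∈ A, ∑ y ∈ B, (if gl ℓ hℓ x y then (-1 : ℝ) else 1))
        = ∑ x ∈ A, (-1 : ℝ) ^ (x (e0 ℓ hℓ)).toNat * F x from ?_]
    · exact fib ℓ hℓ A F hFr
    · refine Finset.sum_congr rfl fun x _ => ?_
      rw [hF, Finset.mul_sum]
      refine Finset.sum_congr rfl fun y _ => ?_
      rw [gl_eq]
  have step2 : ∀ u, F u = ∑ v ∈ R, b v * chi ℓ u v := by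
    intro u
    rw [hF]
    have := fib ℓ hℓ B (fun y => chi ℓ u y) (fun y => by
      rw [chi_symm ℓ u (rst ℓ hℓ y), chi_rst_left, chi_symm])
    exact this
  have hSform : S = ∑ u ∈ R, a u * (∑ v ∈ R, b v * chi ℓ u v) := by
    rw [step1]
    exact Finset.sum_congr rfl fun u _ => by rw [step2]
  -- Cauchy-Schwarz
  have cauchy : S ^ 2 ≤ (∑ u ∈ R, (a u) ^ 2) * (∑ u ∈ R, (∑ v ∈ R, b v * chi ℓ u v) ^ 2) := by
    rw [hSform]
    exact Finset.sum_mul_sq_le_sq_mul_sq R a _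
  -- bound on sum of squares of coefficients
  have sumsq : ∀ C : Finset (Fin ℓ → Bool), (∑ u ∈ R, (coeff ℓ hℓ C u) ^ 2) ≤ P := by
    intro C
    calc (∑ u ∈ R, (coeff ℓ hℓ C u) ^ 2) ≤ ∑ _u ∈ R, (1 : ℝ) :=
          Finset.sum_le_sum fun u _ => coeff_sq_le_one ℓ hℓ C u
      _ = (R.card : ℝ) := by rw [Finset.sum_const, nsmul_eq_mul, mul_one]
      _ = P := by rw [hR, card_Rset, hP]; push_cast; ring
  -- orthogonality bound for the inner sums
  have expand : (∑ u ∈ R, (∑ v ∈ R, b v * chi ℓ u v) ^ 2) = P * ∑ v ∈ R, (b v) ^ 2 := by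
    have e1 : ∀ u, (∑ v ∈ R, b v * chi ℓ u v) ^ 2
        = ∑ v ∈ R, ∑ v' ∈ R, b v * b v' * (chi ℓ u v * chi ℓ u v') := by
      intro u
      rw [sq, Finset.sum_mul_sum]
      exact Finset.sum_congr rfl fun v _ => Finset.sum_congr rfl fun v' _ => by ring
    calc (∑ u ∈ R, (∑ v ∈ R, b v * chi ℓ u v) ^ 2)
        = ∑ u ∈ R, ∑ v ∈ R, ∑ v' ∈ R, b v * b v' * (chi ℓ u v * chi ℓ u v') :=
          Finset.sum_congr rfl fun u _ => e1 u
      _ = ∑ v ∈ R, ∑ u ∈ R, ∑ v' ∈ R, b v * b v' * (chi ℓ u v * chi ℓ u v') :=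
          Finset.sum_comm
      _ = ∑ v ∈ R, ∑ v' ∈ R, ∑ u ∈ R, b v * b v' * (chi ℓ u v * chi ℓ u v') :=
          Finset.sum_congr rfl fun v _ => Finset.sum_comm
      _ = ∑ v ∈ R, ∑ v' ∈ R, b v * b v' * ∑ u ∈ R, chi ℓ u v * chi ℓ u v' := by
          refine Finset.sum_congr rfl fun v _ => Finset.sum_congr rfl fun v' _ => ?_
          rw [Finset.mul_sum]
      _ = ∑ v ∈ R, ∑ v' ∈ R, (if v = v' then b v * b v' * P else 0) := by
          refine Finset.sum_congr rfl fun v hv => Finset.sum_congr rfl fun v' hv' => ?_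
          rw [orth ℓ hℓ v v' (hR ▸ hv) (hR ▸ hv'), mul_ite, mul_zero, hP]
      _ = ∑ v ∈ R, b v * b v * P := by
          refine Finset.sum_congr rfl fun v hv => ?_
          rw [Finset.sum_ite_eq R v (fun v' => b v * b v' * P), if_pos hv]
      _ = P * ∑ v ∈ R, (b v) ^ 2 := by
          rw [Finset.mul_sum]
          exact Finset.sum_congr rfl fun v _ => by ring
  have bound2 : (∑ u ∈ R, (∑ v ∈ R, b v * chi ℓ u v) ^ 2) ≤ P * P := by
    rw [expand]
    exact mul_le_mul_of_nonneg_left (sumsq B) hPnn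
  have sqbound : S ^ 2 ≤ P ^ 3 := by
    calc S ^ 2 ≤ (∑ u ∈ R, (a u) ^ 2) * (∑ u ∈ R, (∑ v ∈ R, b v * chi ℓ u v) ^ 2) := cauchy
      _ ≤ P * (P * P) := by
          refine mul_le_mul (sumsq A) bound2 ?_ hPnn
          exact Finset.sum_nonneg fun u _ => sq_nonneg _
      _ = P ^ 3 := by ring
  -- conclude
  have hm : ((ℓ : ℝ) - 1) = ((ℓ - 1 : ℕ) : ℝ) := by
    rw [Nat.cast_sub hℓ, Nat.cast_one]
  have hrhs_nonneg : (0 : ℝ) ≤ (2 : ℝ) ^ (3 * ((ℓ : ℝ) - 1) / 2) :=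
    Real.rpow_nonneg (by norm_num) _
  have hrhs_sq : ((2 : ℝ) ^ (3 * ((ℓ : ℝ) - 1) / 2)) ^ 2 = P ^ 3 := by
    rw [← Real.rpow_natCast ((2 : ℝ) ^ (3 * ((ℓ : ℝ) - 1) / 2)) 2,
      ← Real.rpow_mul (by norm_num : (0:ℝ) ≤ 2)]
    have : 3 * ((ℓ : ℝ) - 1) / 2 * (2 : ℕ) = ((3 * (ℓ - 1) : ℕ) : ℝ) := by
      rw [hm]; push_cast; ring
    rw [this, Real.rpow_natCast, hP, ← pow_mul, Nat.mul_comm 3, pow_mul]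
  calc |S| = Real.sqrt (S ^ 2) := (Real.sqrt_sq_eq_abs S).symm
    _ ≤ Real.sqrt (((2 : ℝ) ^ (3 * ((ℓ : ℝ) - 1) / 2)) ^ 2) := by
        apply Real.sqrt_le_sqrt
        rw [hrhs_sq]
        exact sqbound
    _ = (2 : ℝ) ^ (3 * ((ℓ : ℝ) - 1) / 2) := Real.sqrt_sq hrhs_nonneg
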